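/- Existence of a ≼-closed and ≼-unique subset: for any finite tree T (e.g., a resulting graph of a reset strategy on a timed decision graph) and any height-monotone preorder ≼ on its nodes, there exists a prefix-closed subset U of nodes of T such that (i) every child of a node of U is ≼-below some element of U, and (ii) no two distinct elements of U are comparable by ≼. -/

import Mathlib

/-- Existence of a `≼`-closed and `≼`-unique prefix-closed subset: in any
finite rooted tree (given by a parent function, every node reaching the root,
with a height function decreasing from parents to children), for any
height-monotone preorder `≼`, there is a prefix-closed set of nodes `U` such
that every child of a node of `U` is `≼`-below some element of `U` and no two
distinct elements of `U` are `≼`-comparable. -/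
theorem exists_closed_unique_subset {V : Type} [Fintype V] [DecidableEq V]
    (root : V) (parent : V → V) (hroot : parent root = root)
    (hreach : ∀ v, ∃ k, parent^[k] v = root)
    (height : V → ℕ)
    (hheight : ∀ v, v ≠ root → height v < height (parent v))
    (le : V → V → Prop)
    (hrefl : ∀ v, le v v)
    (htrans : ∀ u v w, le u v → le v w → le u w)
    (hmono : ∀ u v, le u v → height u ≤ height v) :
    ∃ U : Set V,
      root ∈ U ∧
      (∀ v ∈ U, v ≠ root → parent v ∈ U) ∧
      (∀ u ∈ U, ∀ c, c ≠ root → parent c = u → ∃ u' ∈ U, le c u') ∧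
      (∀ u ∈ U, ∀ u' ∈ U, u ≠ u' → ¬ le u u') := by
  classical
  -- basic height lemmas
  have hstep : ∀ x, height x ≤ height (parent x) := by
    intro x
    by_cases hx : x = root
    · rw [hx, hroot]
    · exact le_of_lt (hheight x hx)
  have hiter : ∀ k x, height x ≤ height (parent^[k] x) := by
    intro k
    induction k with
    | zero => intro x; simp
    | succ n ih =>
      intro x
      rw [Function.iterate_succ_apply']
      exact le_trans (ih x) (hstep _)
  have hlt : ∀ k x u, parent^[k] x = u → x ≠ u → height x < height u := by
    intro k
    induction k with
    | zero => intro x u h hne; exact absurd h hne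
    | succ n ih =>
      intro x u h hne
      rw [Function.iterate_succ_apply] at h
      by_cases hpx : parent x = u
      · have hxr : x ≠ root := by
          intro hx; rw [hx, hroot] at hpx; exact hne (hx.trans hpx)
        rw [← hpx]; exact hheight x hxr
      · have h1 : height (parent x) < height u := ih (parent x) u h hpx
        exact lt_of_le_of_lt (hstep x) h1
  -- the property and weight
  set N := Fintype.card V + 1 with hN
  have hN1 : 1 ≤ N := Nat.le_add_left 1 _
  set P : Finset V → Prop := fun S =>
    root ∈ S ∧ (∀ v ∈ S, v ≠ root → parent v ∈ S) ∧
      (∀ u ∈ S, ∀ c, c ≠ root → parent c = u → ∃ u' ∈ S, le c u') with hP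
  set W : Finset V → ℕ := fun S => ∑ x ∈ S, N ^ height x with hW
  have hPuniv : P Finset.univ := by
    refine ⟨Finset.mem_univ _, fun v _ _ => Finset.mem_univ _, ?_⟩
    intro u _ c _ _
    exact ⟨c, Finset.mem_univ _, hrefl c⟩
  obtain ⟨U, hUmem, hUmin⟩ :=
    Finset.exists_min_image ((Finset.univ : Finset (Finset V)).filter P) W
      ⟨Finset.univ, Finset.mem_filter.mpr ⟨Finset.mem_univ _, hPuniv⟩⟩
  obtain ⟨hUroot, hUpref, hUclosed⟩ := (Finset.mem_filter.mp hUmem).2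
  -- antichain property by contradiction
  have hanti : ∀ u ∈ U, ∀ u' ∈ U, u ≠ u' → ¬ le u u' := by
    intro u hu u' hu' hne hle
    -- u ≠ root
    have huroot : u ≠ root := by
      intro h
      subst h
      obtain ⟨k, hk⟩ := hreach u'
      have := hlt k u' u hk (Ne.symm hne)
      exact absurd (hmono _ _ hle) (not_le_of_gt this)
    set Sub : V → Finset V := fun a =>
      Finset.univ.filter (fun x => ∃ k, parent^[k] x = a) with hSub
    have mem_Sub : ∀ x a, x ∈ Sub a ↔ ∃ k, parent^[k] x = a := by
      intro x a; simp [hSub]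
    have self_Sub : ∀ a, a ∈ Sub a := fun a => (mem_Sub a a).mpr ⟨0, rfl⟩
    have hSub_ht : ∀ x a, x ∈ Sub a → height x ≤ height a := by
      intro x a hx
      obtain ⟨k, hk⟩ := (mem_Sub x a).mp hx
      rw [← hk]; exact hiter k x
    have hSub_lt : ∀ x a, x ∈ Sub a → x ≠ a → height x < height a := by
      intro x a hx hne'
      obtain ⟨k, hk⟩ := (mem_Sub x a).mp hx
      exact hlt k x a hk hne'
    set C : Finset V := Finset.univ.filter (fun c => c ≠ root ∧
        (parent c ∈ U ∧ parent c ∉ Sub u) ∧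
        ∃ w ∈ U, w ∈ Sub u ∧ w ≠ u ∧ le c w) with hC
    have mem_C : ∀ c, c ∈ C ↔ (c ≠ root ∧
        (parent c ∈ U ∧ parent c ∉ Sub u) ∧
        ∃ w ∈ U, w ∈ Sub u ∧ w ≠ u ∧ le c w) := by
      intro c; simp [hC]
    set A : Finset V := C.biUnion Sub with hA
    set U' : Finset V := (U \ Sub u) ∪ A with hU'
    -- heights in A are < height u
    have hu_pos : ∀ x ∈ A, height x < height u := by
      intro x hx
      obtain ⟨c, hc, hxc⟩ := Finset.mem_biUnion.mp hx
      obtain ⟨_, _, w, hwU, hwSub, hwne, hcw⟩ := (mem_C c).mp hc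
      calc height x ≤ height c := hSub_ht x c hxc
        _ ≤ height w := hmono _ _ hcw
        _ < height u := hSub_lt w u hwSub hwne
    -- u' ∉ Sub u
    have hu'Sub : u' ∉ Sub u := by
      intro h
      have := hSub_lt u' u h (Ne.symm hne)
      exact absurd (hmono _ _ hle) (not_le_of_gt this)
    -- root ∉ Sub u
    have hrootSub : root ∉ Sub u := by
      intro h
      obtain ⟨k, hk⟩ := (mem_Sub root u).mp h
      rw [Function.iterate_fixed hroot] at hk
      exact huroot hk.symm
    -- P U'
    have hPU' : P U' := by
      refine ⟨?_, ?_, ?_⟩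
      · exact Finset.mem_union_left _ (Finset.mem_sdiff.mpr ⟨hUroot, hrootSub⟩)
      · -- prefix closed
        intro v hv hvr
        rcases Finset.mem_union.mp hv with hv1 | hv2
        · obtain ⟨hvU, hvSub⟩ := Finset.mem_sdiff.mp hv1
          refine Finset.mem_union_left _ (Finset.mem_sdiff.mpr ⟨hUpref v hvU hvr, ?_⟩)
          intro hp
          obtain ⟨k, hk⟩ := (mem_Sub _ _).mp hp
          exact hvSub ((mem_Sub v u).mpr ⟨k + 1, by
            rw [Function.iterate_succ_apply]; exact hk⟩)
        · obtain ⟨c, hc, hvc⟩ := Finset.mem_biUnion.mp hv2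
          by_cases hvceq : v = c
          · subst hvceq
            obtain ⟨_, ⟨hpU, hpS⟩, _⟩ := (mem_C v).mp hc
            exact Finset.mem_union_left _ (Finset.mem_sdiff.mpr ⟨hpU, hpS⟩)
          · obtain ⟨k, hk⟩ := (mem_Sub v c).mp hvc
            cases k with
            | zero => exact absurd hk hvceq
            | succ n =>
              rw [Function.iterate_succ_apply] at hk
              refine Finset.mem_union_right _ (Finset.mem_biUnion.mpr
                ⟨c, hc, (mem_Sub _ _).mpr ⟨n, hk⟩⟩)
      · -- ≼-closed
        intro v hv c hcr hpc
        rcases Finset.mem_union.mp hv with hv1 | hv2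
        · obtain ⟨hvU, hvSub⟩ := Finset.mem_sdiff.mp hv1
          obtain ⟨w, hwU, hcw⟩ := hUclosed v hvU c hcr hpc
          by_cases hwSub : w ∈ Sub u
          · by_cases hwu : w = u
            · -- use u'
              subst hwu
              refine ⟨u', Finset.mem_union_left _
                (Finset.mem_sdiff.mpr ⟨hu', hu'Sub⟩), htrans _ _ _ hcw hle⟩
            · -- c ∈ C, witness itself
              have hcC : c ∈ C := (mem_C c).mpr
                ⟨hcr, ⟨hpc ▸ hvU, hpc ▸ hvSub⟩, w, hwU, hwSub, hwu, hcw⟩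
              exact ⟨c, Finset.mem_union_right _
                (Finset.mem_biUnion.mpr ⟨c, hcC, self_Sub c⟩), hrefl c⟩
          · exact ⟨w, Finset.mem_union_left _
              (Finset.mem_sdiff.mpr ⟨hwU, hwSub⟩), hcw⟩
        · obtain ⟨d, hd, hvd⟩ := Finset.mem_biUnion.mp hv2
          obtain ⟨k, hk⟩ := (mem_Sub v d).mp hvd
          have : c ∈ Sub d := (mem_Sub c d).mpr ⟨k + 1, by
            rw [Function.iterate_succ_apply, hpc]; exact hk⟩
          exact ⟨c, Finset.mem_union_right _
            (Finset.mem_biUnion.mpr ⟨d, hd, this⟩), hrefl c⟩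
    -- weight decreases
    have hWlt : W U' < W U := by
      have hsplit : W (U ∩ Sub u) + W (U \ Sub u) = W U :=
        Finset.sum_inter_add_sum_sdiff U (Sub u) _
      have hu_in : u ∈ U ∩ Sub u := Finset.mem_inter.mpr ⟨hu, self_Sub u⟩
      have h1 : N ^ height u ≤ W (U ∩ Sub u) :=
        Finset.single_le_sum (f := fun x => N ^ height x)
          (fun _ _ => Nat.zero_le _) hu_in
      have h2 : W U' ≤ W (U \ Sub u) + W A := by
        have := Finset.sum_union_inter (s₁ := U \ Sub u) (s₂ := A)
          (f := fun x => N ^ height x)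
        simp only [hW, hU'] at *
        omega
      have h3 : W A < N ^ height u := by
        rcases Finset.eq_empty_or_nonempty A with hAe | ⟨x, hx⟩
        · rw [hAe]
          simp only [hW, Finset.sum_empty]
          exact Nat.pow_pos (Nat.lt_of_lt_of_le Nat.one_pos hN1)
        · have hpos : 0 < height u := Nat.pos_of_ne_zero (by
            intro h0
            exact absurd (hu_pos x hx) (by simp [h0]))
          obtain ⟨m, hm⟩ := Nat.exists_eq_succ_of_ne_zero (Nat.pos_iff_ne_zero.mp hpos)
          have hb : ∀ y ∈ A, N ^ height y ≤ N ^ m := by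
            intro y hy
            apply Nat.pow_le_pow_right (Nat.lt_of_lt_of_le Nat.one_pos hN1)
            have := hu_pos y hy
            omega
          calc W A ≤ A.card * N ^ m := by
                  simpa [smul_eq_mul] using Finset.sum_le_card_nsmul A _ _ hb
            _ ≤ Fintype.card V * N ^ m :=
                  Nat.mul_le_mul_right _ (by simpa using Finset.card_le_univ A)
            _ < N * N ^ m := by
                  have : 0 < N ^ m := Nat.pow_pos (Nat.lt_of_lt_of_le Nat.one_pos hN1)
                  exact Nat.mul_lt_mul_of_lt_of_le (Nat.lt_succ_self _) (le_refl _) this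
            _ = N ^ height u := by rw [hm, pow_succ]; ring
      omega
    have hU'mem : U' ∈ (Finset.univ : Finset (Finset V)).filter P :=
      Finset.mem_filter.mpr ⟨Finset.mem_univ _, hPU'⟩
    exact absurd (hUmin U' hU'mem) (not_le_of_gt hWlt)
  refine ⟨↑U, hUroot, ?_, ?_, ?_⟩
  · intro v hv hvr; exact hUpref v hv hvr
  · intro x hx c hcr hpc
    obtain ⟨w, hw, hcw⟩ := hUclosed x hx c hcr hpc
    exact ⟨w, hw, hcw⟩
  · intro x hx y hy hne; exact hanti x hx y hy hne
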